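/- arXiv:0804.4565 — 7 statements merged into one kernel-verified Lean document; each statement's English description precedes it below -/
import Mathlib

section
/- For all closed terms over the signature of data linkage algebra (DLA), there exists a basic term (one built only from the atomic constants s=a, a/f, a.f=b, a:n, the empty data linkage ∅, and the combination operator ⊕) that is provably equal to it using the axioms of DLA. -/
/-- Terms over the signature of data linkage algebra (DLA). -/
inductive DLATerm (S F A V : Type) : Type where
  | sl : S → A → DLATerm S F A V              -- spot link  s = a
  | pf : A → F → DLATerm S F A V              -- partial field link  a / f
  | fl : A → F → A → DLATerm S F A V          -- field link  a . f = b
  | va : A → V → DLATerm S F A V              -- value association  a : n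
  | emp : DLATerm S F A V                      -- empty data linkage ∅
  | comb : DLATerm S F A V → DLATerm S F A V → DLATerm S F A V  -- ⊕
  | ovr : DLATerm S F A V → DLATerm S F A V → DLATerm S F A V   -- ⊘

namespace DLATerm

variable {S F A V : Type}

/-- Derivable equality from the axioms of DLA (Table 1). -/
inductive Eq : DLATerm S F A V → DLATerm S F A V → Prop where
  -- equational logic
  | refl (X) : Eq X X
  | symm {X Y} : Eq X Y → Eq Y X
  | trans {X Y Z} : Eq X Y → Eq Y Z → Eq X Z
  | comb_congr {X X' Y Y'} : Eq X X' → Eq Y Y' → Eq (comb X Y) (comb X' Y')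
  | ovr_congr {X X' Y Y'} : Eq X X' → Eq Y Y' → Eq (ovr X Y) (ovr X' Y')
  -- ⊕ is commutative, associative, idempotent with identity ∅
  | comb_comm (X Y) : Eq (comb X Y) (comb Y X)
  | comb_assoc (X Y Z) : Eq (comb X (comb Y Z)) (comb (comb X Y) Z)
  | comb_idem (X) : Eq (comb X X) X
  | comb_emp (X) : Eq (comb X emp) X
  -- ∅ is identity for ⊘, and ⊘ distributes over ⊕ on the right
  | emp_ovr (X) : Eq (ovr emp X) X
  | ovr_emp (X) : Eq (ovr X emp) X
  | ovr_distrib (X Y Z) : Eq (ovr X (comb Y Z)) (comb (ovr X Y) (ovr X Z))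
  -- overriding laws
  | ovr_sl_sl (X s a b) : Eq (ovr (comb X (sl s a)) (sl s b)) (ovr X (sl s b))
  | ovr_pf_pf (X a f) : Eq (ovr (comb X (pf a f)) (pf a f)) (ovr X (pf a f))
  | ovr_fl_pf (X a f b) : Eq (ovr (comb X (fl a f b)) (pf a f)) (ovr X (pf a f))
  | ovr_pf_fl (X a f b) : Eq (ovr (comb X (pf a f)) (fl a f b)) (ovr X (fl a f b))
  | ovr_fl_fl (X a f b c) : Eq (ovr (comb X (fl a f b)) (fl a f c)) (ovr X (fl a f c))
  | ovr_va_va (X a n m) : Eq (ovr (comb X (va a n)) (va a m)) (ovr X (va a m))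
  -- commutation laws for non-interfering atomic data linkages
  | comm_sl_sl (X s t a b) (h : s ≠ t) :
      Eq (ovr (comb X (sl s a)) (sl t b)) (comb (ovr X (sl t b)) (sl s a))
  | comm_pf_sl (X a f s b) :
      Eq (ovr (comb X (pf a f)) (sl s b)) (comb (ovr X (sl s b)) (pf a f))
  | comm_fl_sl (X a f b s c) :
      Eq (ovr (comb X (fl a f b)) (sl s c)) (comb (ovr X (sl s c)) (fl a f b))
  | comm_va_sl (X a n s b) :
      Eq (ovr (comb X (va a n)) (sl s b)) (comb (ovr X (sl s b)) (va a n))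
  | comm_sl_pf (X s a b f) :
      Eq (ovr (comb X (sl s a)) (pf b f)) (comb (ovr X (pf b f)) (sl s a))
  | comm_pf_pf (X a f b g) (h : a ≠ b ∨ f ≠ g) :
      Eq (ovr (comb X (pf a f)) (pf b g)) (comb (ovr X (pf b g)) (pf a f))
  | comm_fl_pf (X a f b c g) (h : a ≠ c ∨ f ≠ g) :
      Eq (ovr (comb X (fl a f b)) (pf c g)) (comb (ovr X (pf c g)) (fl a f b))
  | comm_va_pf (X a n b f) :
      Eq (ovr (comb X (va a n)) (pf b f)) (comb (ovr X (pf b f)) (va a n))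
  | comm_sl_fl (X s a b f c) :
      Eq (ovr (comb X (sl s a)) (fl b f c)) (comb (ovr X (fl b f c)) (sl s a))
  | comm_pf_fl (X a f b g c) (h : a ≠ b ∨ f ≠ g) :
      Eq (ovr (comb X (pf a f)) (fl b g c)) (comb (ovr X (fl b g c)) (pf a f))
  | comm_fl_fl (X a f b c g d) (h : a ≠ c ∨ f ≠ g) :
      Eq (ovr (comb X (fl a f b)) (fl c g d)) (comb (ovr X (fl c g d)) (fl a f b))
  | comm_va_fl (X a n b f c) :
      Eq (ovr (comb X (va a n)) (fl b f c)) (comb (ovr X (fl b f c)) (va a n))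
  | comm_sl_va (X s a b n) :
      Eq (ovr (comb X (sl s a)) (va b n)) (comb (ovr X (va b n)) (sl s a))
  | comm_pf_va (X a f b n) :
      Eq (ovr (comb X (pf a f)) (va b n)) (comb (ovr X (va b n)) (pf a f))
  | comm_fl_va (X a f b c n) :
      Eq (ovr (comb X (fl a f b)) (va c n)) (comb (ovr X (va c n)) (fl a f b))
  | comm_va_va (X a n b m) (h : a ≠ b) :
      Eq (ovr (comb X (va a n)) (va b m)) (comb (ovr X (va b m)) (va a n))

/-- Basic terms: terms in which the overriding combination operator ⊘ does not
occur. -/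
def Basic : DLATerm S F A V → Prop
  | sl _ _ => True
  | pf _ _ => True
  | fl _ _ _ => True
  | va _ _ => True
  | emp => True
  | comb X Y => Basic X ∧ Basic Y
  | ovr _ _ => False

open Classical in
/-- Key step: pushing one atom past an overriding. -/
private lemma step {X u v : DLATerm S F A V}
    (hu : (match u with | sl _ _ | pf _ _ | fl _ _ _ | va _ _ => True | _ => False))
    (hv : (match v with | sl _ _ | pf _ _ | fl _ _ _ | va _ _ => True | _ => False))
    (h : ∃ B, Basic B ∧ Eq (ovr X v) B) :
    ∃ B, Basic B ∧ Eq (ovr (comb X u) v) B := by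
  obtain ⟨B, hB, hE⟩ := h
  cases u <;> cases v <;> simp only [] at hu hv
  case sl.sl s a t b =>
    by_cases hst : s = t
    · subst hst; exact ⟨B, hB, (Eq.ovr_sl_sl X s a b).trans hE⟩
    · exact ⟨comb B (sl s a), ⟨hB, trivial⟩,
        (Eq.comm_sl_sl X s t a b hst).trans (Eq.comb_congr hE (Eq.refl _))⟩
  case sl.pf s a b f =>
    exact ⟨comb B (sl s a), ⟨hB, trivial⟩,
      (Eq.comm_sl_pf X s a b f).trans (Eq.comb_congr hE (Eq.refl _))⟩
  case sl.fl s a b f c =>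
    exact ⟨comb B (sl s a), ⟨hB, trivial⟩,
      (Eq.comm_sl_fl X s a b f c).trans (Eq.comb_congr hE (Eq.refl _))⟩
  case sl.va s a b n =>
    exact ⟨comb B (sl s a), ⟨hB, trivial⟩,
      (Eq.comm_sl_va X s a b n).trans (Eq.comb_congr hE (Eq.refl _))⟩
  case pf.sl a f s b =>
    exact ⟨comb B (pf a f), ⟨hB, trivial⟩,
      (Eq.comm_pf_sl X a f s b).trans (Eq.comb_congr hE (Eq.refl _))⟩
  case pf.pf a f b g =>
    by_cases hab : a = b
    · by_cases hfg : f = g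
      · subst hab; subst hfg
        exact ⟨B, hB, (Eq.ovr_pf_pf X a f).trans hE⟩
      · exact ⟨comb B (pf a f), ⟨hB, trivial⟩,
          (Eq.comm_pf_pf X a f b g (Or.inr hfg)).trans (Eq.comb_congr hE (Eq.refl _))⟩
    · exact ⟨comb B (pf a f), ⟨hB, trivial⟩,
        (Eq.comm_pf_pf X a f b g (Or.inl hab)).trans (Eq.comb_congr hE (Eq.refl _))⟩
  case pf.fl a f b g c =>
    by_cases hab : a = b
    · by_cases hfg : f = g
      · subst hab; subst hfg
        exact ⟨B, hB, (Eq.ovr_pf_fl X a f c).trans hE⟩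
      · exact ⟨comb B (pf a f), ⟨hB, trivial⟩,
          (Eq.comm_pf_fl X a f b g c (Or.inr hfg)).trans (Eq.comb_congr hE (Eq.refl _))⟩
    · exact ⟨comb B (pf a f), ⟨hB, trivial⟩,
        (Eq.comm_pf_fl X a f b g c (Or.inl hab)).trans (Eq.comb_congr hE (Eq.refl _))⟩
  case pf.va a f b n =>
    exact ⟨comb B (pf a f), ⟨hB, trivial⟩,
      (Eq.comm_pf_va X a f b n).trans (Eq.comb_congr hE (Eq.refl _))⟩
  case fl.sl a f b s c =>
    exact ⟨comb B (fl a f b), ⟨hB, trivial⟩,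
      (Eq.comm_fl_sl X a f b s c).trans (Eq.comb_congr hE (Eq.refl _))⟩
  case fl.pf a f b c g =>
    by_cases hac : a = c
    · by_cases hfg : f = g
      · subst hac; subst hfg
        exact ⟨B, hB, (Eq.ovr_fl_pf X a f b).trans hE⟩
      · exact ⟨comb B (fl a f b), ⟨hB, trivial⟩,
          (Eq.comm_fl_pf X a f b c g (Or.inr hfg)).trans (Eq.comb_congr hE (Eq.refl _))⟩
    · exact ⟨comb B (fl a f b), ⟨hB, trivial⟩,
        (Eq.comm_fl_pf X a f b c g (Or.inl hac)).trans (Eq.comb_congr hE (Eq.refl _))⟩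
  case fl.fl a f b c g d =>
    by_cases hac : a = c
    · by_cases hfg : f = g
      · subst hac; subst hfg
        exact ⟨B, hB, (Eq.ovr_fl_fl X a f b d).trans hE⟩
      · exact ⟨comb B (fl a f b), ⟨hB, trivial⟩,
          (Eq.comm_fl_fl X a f b c g d (Or.inr hfg)).trans (Eq.comb_congr hE (Eq.refl _))⟩
    · exact ⟨comb B (fl a f b), ⟨hB, trivial⟩,
        (Eq.comm_fl_fl X a f b c g d (Or.inl hac)).trans (Eq.comb_congr hE (Eq.refl _))⟩
  case fl.va a f b c n =>
    exact ⟨comb B (fl a f b), ⟨hB, trivial⟩,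
      (Eq.comm_fl_va X a f b c n).trans (Eq.comb_congr hE (Eq.refl _))⟩
  case va.sl a n s b =>
    exact ⟨comb B (va a n), ⟨hB, trivial⟩,
      (Eq.comm_va_sl X a n s b).trans (Eq.comb_congr hE (Eq.refl _))⟩
  case va.pf a n b f =>
    exact ⟨comb B (va a n), ⟨hB, trivial⟩,
      (Eq.comm_va_pf X a n b f).trans (Eq.comb_congr hE (Eq.refl _))⟩
  case va.fl a n b f c =>
    exact ⟨comb B (va a n), ⟨hB, trivial⟩,
      (Eq.comm_va_fl X a n b f c).trans (Eq.comb_congr hE (Eq.refl _))⟩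
  case va.va a n b m =>
    by_cases hab : a = b
    · subst hab; exact ⟨B, hB, (Eq.ovr_va_va X a n m).trans hE⟩
    · exact ⟨comb B (va a n), ⟨hB, trivial⟩,
        (Eq.comm_va_va X a n b m hab).trans (Eq.comb_congr hE (Eq.refl _))⟩

/-- A size measure making right-reassociation decrease. -/
private def sz : DLATerm S F A V → Nat
  | comb X Y => sz X + 2 * sz Y
  | ovr X Y => sz X + sz Y + 1
  | _ => 1

private lemma sz_pos (X : DLATerm S F A V) : 1 ≤ sz X := by
  induction X <;> simp [sz] <;> omega

private lemma ovr_atom : ∀ (n : Nat) (X v : DLATerm S F A V), sz X ≤ n → Basic X →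
    (match v with | sl _ _ | pf _ _ | fl _ _ _ | va _ _ => True | _ => False) →
    ∃ B, Basic B ∧ Eq (ovr X v) B := by
  intro n
  induction n with
  | zero => intro X v h _ _; have := sz_pos X; omega
  | succ n ih =>
    intro X v hsz hX hv
    have hbase : ∃ B, Basic B ∧ Eq (ovr emp v) B := by
      refine ⟨v, ?_, Eq.emp_ovr v⟩
      cases v <;> simp only [] at hv <;> trivial
    have hwrap : ∀ u : DLATerm S F A V, X = u →
        (match u with | sl _ _ | pf _ _ | fl _ _ _ | va _ _ => True | _ => False) →
        ∃ B, Basic B ∧ Eq (ovr X v) B := by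
      intro u hXu hu
      subst hXu
      obtain ⟨B, hB, hE⟩ := step (X := emp) hu hv hbase
      have h1 : Eq X (comb emp X) :=
        Eq.symm ((Eq.comb_comm emp X).trans (Eq.comb_emp X))
      exact ⟨B, hB, (Eq.ovr_congr h1 (Eq.refl v)).trans hE⟩
    cases X with
    | sl s a => exact hwrap _ rfl trivial
    | pf a f => exact hwrap _ rfl trivial
    | fl a f b => exact hwrap _ rfl trivial
    | va a n => exact hwrap _ rfl trivial
    | emp => exact hbase
    | ovr _ _ => exact absurd hX (by simp [Basic])
    | comb Y Z =>
      obtain ⟨hY, hZ⟩ := hX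
      have hYcomb : ∀ u : DLATerm S F A V, Z = u →
          (match u with | sl _ _ | pf _ _ | fl _ _ _ | va _ _ => True | _ => False) →
          ∃ B, Basic B ∧ Eq (ovr (comb Y Z) v) B := by
        intro u hZu hu
        subst hZu
        have hszY : sz Y ≤ n := by
          have h1 := sz_pos Z
          simp only [sz] at hsz
          omega
        exact step hu hv (ih Y v hszY hY hv)
      cases Z with
      | sl s a => exact hYcomb _ rfl trivial
      | pf a f => exact hYcomb _ rfl trivial
      | fl a f b => exact hYcomb _ rfl trivial
      | va a n => exact hYcomb _ rfl trivial
      | emp =>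
        have hszY : sz Y ≤ n := by simp [sz] at hsz; omega
        obtain ⟨B, hB, hE⟩ := ih Y v hszY hY hv
        exact ⟨B, hB, (Eq.ovr_congr (Eq.comb_emp Y) (Eq.refl v)).trans hE⟩
      | ovr _ _ => exact absurd hZ (by simp [Basic])
      | comb Z1 Z2 =>
        obtain ⟨hZ1, hZ2⟩ := hZ
        have hsz' : sz (comb (comb Y Z1) Z2) ≤ n := by
          have h2 := sz_pos Z2
          simp only [sz] at hsz ⊢
          omega
        obtain ⟨B, hB, hE⟩ := ih (comb (comb Y Z1) Z2) v hsz' ⟨⟨hY, hZ1⟩, hZ2⟩ hv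
        exact ⟨B, hB, (Eq.ovr_congr (Eq.comb_assoc Y Z1 Z2) (Eq.refl v)).trans hE⟩

private lemma ovr_basic : ∀ (Y : DLATerm S F A V), Basic Y →
    ∀ X : DLATerm S F A V, Basic X → ∃ B, Basic B ∧ Eq (ovr X Y) B := by
  intro Y
  induction Y with
  | sl s a => intro _ X hX; exact ovr_atom (sz X) X _ le_rfl hX trivial
  | pf a f => intro _ X hX; exact ovr_atom (sz X) X _ le_rfl hX trivial
  | fl a f b => intro _ X hX; exact ovr_atom (sz X) X _ le_rfl hX trivial
  | va a n => intro _ X hX; exact ovr_atom (sz X) X _ le_rfl hX trivial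
  | emp => intro _ X hX; exact ⟨X, hX, Eq.ovr_emp X⟩
  | ovr _ _ _ _ => intro h; exact absurd h (by simp [Basic])
  | comb Y1 Y2 ih1 ih2 =>
    intro hY X hX
    obtain ⟨hY1, hY2⟩ := hY
    obtain ⟨B1, hB1, hE1⟩ := ih1 hY1 X hX
    obtain ⟨B2, hB2, hE2⟩ := ih2 hY2 X hX
    exact ⟨comb B1 B2, ⟨hB1, hB2⟩,
      (Eq.ovr_distrib X Y1 Y2).trans (Eq.comb_congr hE1 hE2)⟩

/-- Elimination: every closed DLA term is provably equal, using
the axioms of DLA, to a basic term. -/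
theorem elimination (L : DLATerm S F A V) :
    ∃ L' : DLATerm S F A V, Basic L' ∧ Eq L L' := by
  induction L with
  | sl s a => exact ⟨sl s a, trivial, Eq.refl _⟩
  | pf a f => exact ⟨pf a f, trivial, Eq.refl _⟩
  | fl a f b => exact ⟨fl a f b, trivial, Eq.refl _⟩
  | va a n => exact ⟨va a n, trivial, Eq.refl _⟩
  | emp => exact ⟨emp, trivial, Eq.refl _⟩
  | comb X Y ihX ihY =>
    obtain ⟨X', hX', hEX⟩ := ihX
    obtain ⟨Y', hY', hEY⟩ := ihY
    exact ⟨comb X' Y', ⟨hX', hY'⟩, Eq.comb_congr hEX hEY⟩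
  | ovr X Y ihX ihY =>
    obtain ⟨X', hX', hEX⟩ := ihX
    obtain ⟨Y', hY', hEY⟩ := ihY
    obtain ⟨B, hB, hE⟩ := ovr_basic Y' hY' X' hX'
    exact ⟨B, hB, (Eq.ovr_congr hEX hEY).trans hE⟩

end DLATerm
end

section
/- If L is a deterministic data linkage (represented as a finite set of atomic data linkages), then for every basic action α of data linkage dynamics, the result of applying the effect operation for α to L is again deterministic. -/
open scoped Classical

inductive Atomic (S F A V : Type) : Type where
  | sLink : S → A → Atomic S F A V
  | pfLink : A → F → Atomic S F A V
  | fLink : A → F → A → Atomic S F A V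
  | vAss : A → V → Atomic S F A V
  deriving DecidableEq, Fintype

structure CState (S F A V : Type) where
  sigma : S → Option A
  zeta : A → Option (F → Option (Option A))
  xi : A → Option (Option V)

variable {S F A V : Type}

/-- Well-formedness: membership in DLR. -/
def InDLR (c : CState S F A V) : Prop :=
  (∀ a, (c.zeta a).isSome ↔ (c.xi a).isSome) ∧
  (∀ s a, c.sigma s = some a → (c.zeta a).isSome) ∧
  (∀ a g f b, c.zeta a = some g → g f = some (some b) → (c.zeta b).isSome)

noncomputable def retrieve [Fintype S] [Fintype F] [Fintype A] [Fintype V]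
    [DecidableEq S] [DecidableEq F] [DecidableEq A] [DecidableEq V]
    (c : CState S F A V) : Finset (Atomic S F A V) :=
  Finset.univ.filter (fun x => match x with
    | .sLink s a => c.sigma s = some a
    | .pfLink a f => (c.zeta a).map (fun g => g f) = some (some none)
    | .fLink a f b => (c.zeta a).map (fun g => g f) = some (some (some b))
    | .vAss a n => c.xi a = some (some n))

def Deterministic (L : Finset (Atomic S F A V)) : Prop :=
  (∀ s a b, Atomic.sLink s a ∈ L → Atomic.sLink s b ∈ L → a = b) ∧
  (∀ a f b c, Atomic.fLink a f b ∈ L → Atomic.fLink a f c ∈ L → b = c) ∧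
  (∀ a f b, Atomic.fLink a f b ∈ L → Atomic.pfLink a f ∉ L) ∧
  (∀ a n m, Atomic.vAss a n ∈ L → Atomic.vAss a m ∈ L → n = m)

/-- The basic actions of data linkage dynamics. -/
inductive Act (S F : Type) : Type where
  | getAO : S → Act S F                     -- get fresh atomic object
  | setSpot : S → S → Act S F
  | clrSpot : S → Act S F
  | eqTest : S → S → Act S F
  | undefTest : S → Act S F
  | addField : S → F → Act S F
  | rmvField : S → F → Act S F
  | hasFieldA : S → F → Act S F
  | setField : S → F → S → Act S F
  | clrField : S → F → Act S F
  | getField : S → S → F → Act S F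
  | assZero : S → Act S F
  | assOne : S → Act S F
  | assAdd : S → S → S → Act S F
  | assMul : S → S → S → Act S F
  | assNeg : S → S → Act S F
  | assInv : S → S → Act S F
  | eqValTest : S → S → Act S F
  | undefValTest : S → Act S F

section Effects

variable [Fintype S] [Fintype F] [Fintype A] [Fintype V]
variable [DecidableEq S] [DecidableEq F] [DecidableEq A] [DecidableEq V]

/-- Candidate contents of spot `s` in `L`. -/
noncomputable def spotCands (L : Finset (Atomic S F A V)) (s : S) : Finset A :=
  Finset.univ.filter (fun a => Atomic.sLink s a ∈ L)

/-- Candidate contents of field `f` of atomic object `a` in `L`. -/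
noncomputable def fieldCands (L : Finset (Atomic S F A V)) (a : A) (f : F) :
    Finset A :=
  Finset.univ.filter (fun b => Atomic.fLink a f b ∈ L)

/-- Candidate values assigned to atomic object `a` in `L`. -/
noncomputable def valCands (L : Finset (Atomic S F A V)) (a : A) : Finset V :=
  Finset.univ.filter (fun n => Atomic.vAss a n ∈ L)

/-- Spot `s` is locally deterministic in `L`. -/
def ldSpot (L : Finset (Atomic S F A V)) (s : S) : Prop :=
  (spotCands L s).card ≤ 1

/-- Field `f` of atomic object `a` is locally deterministic in `L`. -/
def ldField (L : Finset (Atomic S F A V)) (a : A) (f : F) : Prop :=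
  (fieldCands L a f).card + (if Atomic.pfLink a f ∈ L then 1 else 0) ≤ 1

/-- The value association of atomic object `a` is locally deterministic. -/
def ldVal (L : Finset (Atomic S F A V)) (a : A) : Prop :=
  (valCands L a).card ≤ 1

/-- Atomic object `a` has field `f` in `L`. -/
def hasFld (L : Finset (Atomic S F A V)) (a : A) (f : F) : Prop :=
  Atomic.pfLink a f ∈ L ∨ (fieldCands L a f).Nonempty

/-- The atomic objects occurring in `L`. -/
noncomputable def atomsOf (L : Finset (Atomic S F A V)) : Finset A :=
  L.biUnion (fun x => match x with
    | .sLink _ a => {a}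
    | .pfLink a _ => {a}
    | .fLink a _ b => {a, b}
    | .vAss a _ => {a})

/-- Remove all spot links at spot `s`. -/
noncomputable def rmSpot (L : Finset (Atomic S F A V)) (s : S) :
    Finset (Atomic S F A V) :=
  L.filter (fun x => ∀ a : A, x ≠ Atomic.sLink s a)

/-- All atomic data linkages concerning field `f` of atomic object `a`. -/
noncomputable def fieldAtoms (a : A) (f : F) : Finset (Atomic S F A V) :=
  insert (Atomic.pfLink a f) (Finset.univ.image (fun b => Atomic.fLink a f b))

/-- All value associations with atomic object `a`. -/
noncomputable def valAtoms (a : A) : Finset (Atomic S F A V) :=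
  Finset.univ.image (fun n => Atomic.vAss a n)

variable [Zero V] [One V] [Add V] [Mul V] [Neg V] [Inv V]

/-- The effect of a basic action of DLD on a data linkage (represented as a
finite set of atomic data linkages), in the set-based semantics: if a
non-locally-deterministic spot or field is involved, the effect is the
identity. The parameter `cf` is the choice function used to obtain fresh atomic
objects. -/
noncomputable def effect (cf : Finset A → A) (α : Act S F)
    (L : Finset (Atomic S F A V)) : Finset (Atomic S F A V) :=
  match α with
  | .getAO s =>
      if ldSpot L s then
        if atomsOf L = Finset.univ then L
        else rmSpot L s ∪ {Atomic.sLink s (cf (Finset.univ \ atomsOf L))}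
      else L
  | .setSpot s t =>
      if ldSpot L s ∧ ldSpot L t then
        rmSpot L s ∪ (spotCands L t).image (fun a => Atomic.sLink s a)
      else L
  | .clrSpot s => if ldSpot L s then rmSpot L s else L
  | .eqTest _ _ => L
  | .undefTest _ => L
  | .addField s f =>
      if ldSpot L s ∧ ∀ a ∈ spotCands L s, ldField L a f then
        L ∪ ((spotCands L s).filter (fun a => ¬ hasFld L a f)).image
              (fun a => Atomic.pfLink a f)
      else L
  | .rmvField s f =>
      if ldSpot L s ∧ ∀ a ∈ spotCands L s, ldField L a f then
        L \ (spotCands L s).biUnion (fun a => fieldAtoms a f)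
      else L
  | .hasFieldA _ _ => L
  | .setField s f t =>
      if ldSpot L s ∧ ldSpot L t ∧
          ∀ a ∈ spotCands L s, ldField L a f ∧ hasFld L a f then
        (L \ (spotCands L s).biUnion (fun a => fieldAtoms a f)) ∪
          (spotCands L s).biUnion (fun a =>
            if (spotCands L t).Nonempty then
              (spotCands L t).image (fun b => Atomic.fLink a f b)
            else {Atomic.pfLink a f})
      else L
  | .clrField s f =>
      if ldSpot L s ∧ ∀ a ∈ spotCands L s, ldField L a f ∧ hasFld L a f then
        (L \ (spotCands L s).biUnion (fun a => fieldAtoms a f)) ∪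
          (spotCands L s).image (fun a => Atomic.pfLink a f)
      else L
  | .getField s t f =>
      if ldSpot L s ∧ ldSpot L t ∧
          ∀ a ∈ spotCands L t, ldField L a f ∧ hasFld L a f then
        rmSpot L s ∪ (spotCands L t).biUnion (fun a =>
          (fieldCands L a f).image (fun b => Atomic.sLink s b))
      else L
  | .assZero s =>
      if ldSpot L s ∧ ∀ a ∈ spotCands L s, ldVal L a then
        (L \ (spotCands L s).biUnion valAtoms) ∪
          (spotCands L s).image (fun a => Atomic.vAss a (0 : V))
      else L
  | .assOne s =>
      if ldSpot L s ∧ ∀ a ∈ spotCands L s, ldVal L a then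
        (L \ (spotCands L s).biUnion valAtoms) ∪
          (spotCands L s).image (fun a => Atomic.vAss a (1 : V))
      else L
  | .assAdd s t u =>
      if ldSpot L s ∧ ldSpot L t ∧ ldSpot L u ∧
          (∀ a ∈ spotCands L s, ldVal L a) ∧
          (∀ a ∈ spotCands L t, ldVal L a) ∧
          (∀ a ∈ spotCands L u, ldVal L a) ∧
          (spotCands L s).Nonempty ∧
          (∃ a ∈ spotCands L t, (valCands L a).Nonempty) ∧
          (∃ a ∈ spotCands L u, (valCands L a).Nonempty) then
        (L \ (spotCands L s).biUnion valAtoms) ∪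
          (spotCands L s).biUnion (fun a =>
            ((spotCands L t).biUnion (valCands L)).biUnion (fun n =>
              ((spotCands L u).biUnion (valCands L)).image
                (fun m => Atomic.vAss a (n + m))))
      else L
  | .assMul s t u =>
      if ldSpot L s ∧ ldSpot L t ∧ ldSpot L u ∧
          (∀ a ∈ spotCands L s, ldVal L a) ∧
          (∀ a ∈ spotCands L t, ldVal L a) ∧
          (∀ a ∈ spotCands L u, ldVal L a) ∧
          (spotCands L s).Nonempty ∧
          (∃ a ∈ spotCands L t, (valCands L a).Nonempty) ∧
          (∃ a ∈ spotCands L u, (valCands L a).Nonempty) then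
        (L \ (spotCands L s).biUnion valAtoms) ∪
          (spotCands L s).biUnion (fun a =>
            ((spotCands L t).biUnion (valCands L)).biUnion (fun n =>
              ((spotCands L u).biUnion (valCands L)).image
                (fun m => Atomic.vAss a (n * m))))
      else L
  | .assNeg s t =>
      if ldSpot L s ∧ ldSpot L t ∧
          (∀ a ∈ spotCands L s, ldVal L a) ∧
          (∀ a ∈ spotCands L t, ldVal L a) ∧
          (spotCands L s).Nonempty ∧
          (∃ a ∈ spotCands L t, (valCands L a).Nonempty) then
        (L \ (spotCands L s).biUnion valAtoms) ∪
          (spotCands L s).biUnion (fun a =>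
            ((spotCands L t).biUnion (valCands L)).image
              (fun n => Atomic.vAss a (-n)))
      else L
  | .assInv s t =>
      if ldSpot L s ∧ ldSpot L t ∧
          (∀ a ∈ spotCands L s, ldVal L a) ∧
          (∀ a ∈ spotCands L t, ldVal L a) ∧
          (spotCands L s).Nonempty ∧
          (∃ a ∈ spotCands L t, (valCands L a).Nonempty) then
        (L \ (spotCands L s).biUnion valAtoms) ∪
          (spotCands L s).biUnion (fun a =>
            ((spotCands L t).biUnion (valCands L)).image
              (fun n => Atomic.vAss a n⁻¹))
      else L
  | .eqValTest _ _ => L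
  | .undefValTest _ => L

@[simp] lemma mem_spotCands {L : Finset (Atomic S F A V)} {s : S} {a : A} :
    a ∈ spotCands L s ↔ Atomic.sLink s a ∈ L := by simp [spotCands]

@[simp] lemma mem_fieldCands {L : Finset (Atomic S F A V)} {a : A} {f : F} {b : A} :
    b ∈ fieldCands L a f ↔ Atomic.fLink a f b ∈ L := by simp [fieldCands]

@[simp] lemma mem_valCands {L : Finset (Atomic S F A V)} {a : A} {n : V} :
    n ∈ valCands L a ↔ Atomic.vAss a n ∈ L := by simp [valCands]

@[simp] lemma mem_rmSpot {L : Finset (Atomic S F A V)} {s : S} {x : Atomic S F A V} :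
    x ∈ rmSpot L s ↔ x ∈ L ∧ ∀ a : A, x ≠ Atomic.sLink s a := by simp [rmSpot]

@[simp] lemma mem_fieldAtoms {a : A} {f : F} {x : Atomic S F A V} :
    x ∈ fieldAtoms a f ↔ x = Atomic.pfLink a f ∨ ∃ b, x = Atomic.fLink a f b := by
  simp [fieldAtoms, eq_comm]

@[simp] lemma mem_valAtoms {a : A} {x : Atomic S F A V} :
    x ∈ valAtoms a ↔ ∃ n : V, x = Atomic.vAss a n := by
  simp [valAtoms, eq_comm]

lemma det_subset {L M : Finset (Atomic S F A V)} (hML : M ⊆ L)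
    (hL : Deterministic L) : Deterministic M := by
  obtain ⟨h1, h2, h3, h4⟩ := hL
  exact ⟨fun s a b ha hb => h1 s a b (hML ha) (hML hb),
    fun a f b c hb hc => h2 a f b c (hML hb) (hML hc),
    fun a f b hb hp => h3 a f b (hML hb) (hML hp),
    fun a n m hn hm => h4 a n m (hML hn) (hML hm)⟩

/-- Replacing the spot link at `s` preserves determinism. -/
lemma det_spot_replace {L N : Finset (Atomic S F A V)} {s : S}
    (hL : Deterministic L)
    (hN : ∀ x ∈ N, ∃ a : A, x = Atomic.sLink s a)
    (hN1 : ∀ a b : A, Atomic.sLink s a ∈ N → Atomic.sLink s b ∈ N → a = b) :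
    Deterministic (rmSpot L s ∪ N) := by
  obtain ⟨h1, h2, h3, h4⟩ := hL
  refine ⟨?_, ?_, ?_, ?_⟩
  · intro t a b ha hb
    simp only [Finset.mem_union, mem_rmSpot] at ha hb
    rcases ha with ⟨ha, hne⟩ | ha
    · rcases hb with ⟨hb, hne'⟩ | hb
      · exact h1 t a b ha hb
      · obtain ⟨c, hc⟩ := hN _ hb
        cases hc; exact absurd rfl (hne a)
    · obtain ⟨c, hc⟩ := hN _ ha
      cases hc
      rcases hb with ⟨hb, hne'⟩ | hb
      · exact absurd rfl (hne' b)
      · exact hN1 a b ha hb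
  · intro a f b c hb hc
    simp only [Finset.mem_union, mem_rmSpot] at hb hc
    rcases hb with ⟨hb, _⟩ | hb
    · rcases hc with ⟨hc, _⟩ | hc
      · exact h2 a f b c hb hc
      · obtain ⟨d, hd⟩ := hN _ hc; cases hd
    · obtain ⟨d, hd⟩ := hN _ hb; cases hd
  · intro a f b hb hp
    simp only [Finset.mem_union, mem_rmSpot] at hb hp
    rcases hb with ⟨hb, _⟩ | hb
    · rcases hp with ⟨hp, _⟩ | hp
      · exact h3 a f b hb hp
      · obtain ⟨d, hd⟩ := hN _ hp; cases hd
    · obtain ⟨d, hd⟩ := hN _ hb; cases hd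
  · intro a n m hn hm
    simp only [Finset.mem_union, mem_rmSpot] at hn hm
    rcases hn with ⟨hn, _⟩ | hn
    · rcases hm with ⟨hm, _⟩ | hm
      · exact h4 a n m hn hm
      · obtain ⟨d, hd⟩ := hN _ hm; cases hd
    · obtain ⟨d, hd⟩ := hN _ hn; cases hd

/-- Adding fresh partial field links preserves determinism. -/
lemma det_add_pf {L N : Finset (Atomic S F A V)}
    (hL : Deterministic L)
    (hN : ∀ x ∈ N, ∃ (a : A) (f : F), x = Atomic.pfLink a f ∧
      Atomic.pfLink a f ∉ L ∧ ∀ b : A, Atomic.fLink a f b ∉ L) :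
    Deterministic (L ∪ N) := by
  obtain ⟨h1, h2, h3, h4⟩ := hL
  refine ⟨?_, ?_, ?_, ?_⟩
  · intro t a b ha hb
    simp only [Finset.mem_union] at ha hb
    rcases ha with ha | ha
    · rcases hb with hb | hb
      · exact h1 t a b ha hb
      · obtain ⟨_, _, hd, _⟩ := hN _ hb; cases hd
    · obtain ⟨_, _, hd, _⟩ := hN _ ha; cases hd
  · intro a f b c hb hc
    simp only [Finset.mem_union] at hb hc
    rcases hb with hb | hb
    · rcases hc with hc | hc
      · exact h2 a f b c hb hc
      · obtain ⟨_, _, hd, _⟩ := hN _ hc; cases hd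
    · obtain ⟨_, _, hd, _⟩ := hN _ hb; cases hd
  · intro a f b hb hp
    simp only [Finset.mem_union] at hb hp
    rcases hb with hb | hb
    · rcases hp with hp | hp
      · exact h3 a f b hb hp
      · obtain ⟨a', f', hd, _, hnf⟩ := hN _ hp; cases hd; exact hnf b hb
    · obtain ⟨_, _, hd, _⟩ := hN _ hb; cases hd
  · intro a n m hn hm
    simp only [Finset.mem_union] at hn hm
    rcases hn with hn | hn
    · rcases hm with hm | hm
      · exact h4 a n m hn hm
      · obtain ⟨_, _, hd, _⟩ := hN _ hm; cases hd
    · obtain ⟨_, _, hd, _⟩ := hN _ hn; cases hd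

set_option maxHeartbeats 1000000 in
/-- Replacing the field-`f` atoms of the objects in `T` preserves determinism. -/
lemma det_field_replace {L N : Finset (Atomic S F A V)} {T : Finset A} {f : F}
    (hL : Deterministic L)
    (hN : ∀ x ∈ N, ∃ a ∈ T,
      x = Atomic.pfLink a f ∨ ∃ b, x = Atomic.fLink a f b)
    (hN1 : ∀ a b c : A, Atomic.fLink a f b ∈ N → Atomic.fLink a f c ∈ N → b = c)
    (hN2 : ∀ a b : A, Atomic.fLink a f b ∈ N → Atomic.pfLink a f ∉ N) :
    Deterministic ((L \ T.biUnion (fun a => fieldAtoms a f)) ∪ N) := by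
  obtain ⟨h1, h2, h3, h4⟩ := hL
  have hNf : ∀ (a : A) (f' : F) (b : A), Atomic.fLink a f' b ∈ N → f' = f ∧ a ∈ T := by
    intro a f' b hb
    obtain ⟨a', ha', h⟩ := hN _ hb
    rcases h with h | ⟨b', h⟩ <;> cases h
    exact ⟨rfl, ha'⟩
  have hNp : ∀ (a : A) (f' : F), Atomic.pfLink a f' ∈ N → f' = f ∧ a ∈ T := by
    intro a f' hb
    obtain ⟨a', ha', h⟩ := hN _ hb
    rcases h with h | ⟨b', h⟩ <;> cases h
    exact ⟨rfl, ha'⟩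
  refine ⟨?_, ?_, ?_, ?_⟩
  · intro t a b ha hb
    simp only [Finset.mem_union, Finset.mem_sdiff] at ha hb
    rcases ha with ⟨ha, _⟩ | ha
    · rcases hb with ⟨hb, _⟩ | hb
      · exact h1 t a b ha hb
      · obtain ⟨a', _, h | ⟨b', h⟩⟩ := hN _ hb <;> cases h
    · obtain ⟨a', _, h | ⟨b', h⟩⟩ := hN _ ha <;> cases h
  · intro a f' b c hb hc
    simp only [Finset.mem_union, Finset.mem_sdiff] at hb hc
    rcases hb with ⟨hb, hrb⟩ | hb
    · rcases hc with ⟨hc, _⟩ | hc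
      · exact h2 a f' b c hb hc
      · obtain ⟨rfl, haT⟩ := hNf _ _ _ hc
        exact absurd (Finset.mem_biUnion.mpr ⟨a, haT, by simp⟩) hrb
    · obtain ⟨rfl, haT⟩ := hNf _ _ _ hb
      rcases hc with ⟨hc, hrc⟩ | hc
      · exact absurd (Finset.mem_biUnion.mpr ⟨a, haT, by simp⟩) hrc
      · exact hN1 a b c hb hc
  · intro a f' b hb hp
    simp only [Finset.mem_union, Finset.mem_sdiff] at hb hp
    rcases hb with ⟨hb, hrb⟩ | hb
    · rcases hp with ⟨hp, _⟩ | hp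
      · exact h3 a f' b hb hp
      · obtain ⟨rfl, haT⟩ := hNp _ _ hp
        exact absurd (Finset.mem_biUnion.mpr ⟨a, haT, by simp⟩) hrb
    · obtain ⟨rfl, haT⟩ := hNf _ _ _ hb
      rcases hp with ⟨hp, hrp⟩ | hp
      · exact absurd (Finset.mem_biUnion.mpr ⟨a, haT, by simp⟩) hrp
      · exact hN2 a b hb hp
  · intro a n m hn hm
    simp only [Finset.mem_union, Finset.mem_sdiff] at hn hm
    rcases hn with ⟨hn, _⟩ | hn
    · rcases hm with ⟨hm, _⟩ | hm
      · exact h4 a n m hn hm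
      · obtain ⟨a', _, h | ⟨b', h⟩⟩ := hN _ hm <;> cases h
    · obtain ⟨a', _, h | ⟨b', h⟩⟩ := hN _ hn <;> cases h

/-- Replacing the value associations of the objects in `T` preserves determinism. -/
lemma det_val_replace {L N : Finset (Atomic S F A V)} {T : Finset A}
    (hL : Deterministic L)
    (hN : ∀ x ∈ N, ∃ a ∈ T, ∃ n : V, x = Atomic.vAss a n)
    (hN1 : ∀ (a : A) (n m : V), Atomic.vAss a n ∈ N → Atomic.vAss a m ∈ N → n = m) :
    Deterministic ((L \ T.biUnion valAtoms) ∪ N) := by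
  obtain ⟨h1, h2, h3, h4⟩ := hL
  refine ⟨?_, ?_, ?_, ?_⟩
  · intro t a b ha hb
    simp only [Finset.mem_union, Finset.mem_sdiff] at ha hb
    rcases ha with ⟨ha, _⟩ | ha
    · rcases hb with ⟨hb, _⟩ | hb
      · exact h1 t a b ha hb
      · obtain ⟨_, _, _, h⟩ := hN _ hb; cases h
    · obtain ⟨_, _, _, h⟩ := hN _ ha; cases h
  · intro a f b c hb hc
    simp only [Finset.mem_union, Finset.mem_sdiff] at hb hc
    rcases hb with ⟨hb, _⟩ | hb
    · rcases hc with ⟨hc, _⟩ | hc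
      · exact h2 a f b c hb hc
      · obtain ⟨_, _, _, h⟩ := hN _ hc; cases h
    · obtain ⟨_, _, _, h⟩ := hN _ hb; cases h
  · intro a f b hb hp
    simp only [Finset.mem_union, Finset.mem_sdiff] at hb hp
    rcases hb with ⟨hb, _⟩ | hb
    · rcases hp with ⟨hp, _⟩ | hp
      · exact h3 a f b hb hp
      · obtain ⟨_, _, _, h⟩ := hN _ hp; cases h
    · obtain ⟨_, _, _, h⟩ := hN _ hb; cases h
  · intro a n m hn hm
    simp only [Finset.mem_union, Finset.mem_sdiff] at hn hm
    rcases hn with ⟨hn, hrn⟩ | hn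
    · rcases hm with ⟨hm, hrm⟩ | hm
      · exact h4 a n m hn hm
      · obtain ⟨a', haT, n', h⟩ := hN _ hm; cases h
        exact absurd (Finset.mem_biUnion.mpr ⟨a, haT, by simp⟩) hrn
    · obtain ⟨a', haT, n', h⟩ := hN _ hn; cases h
      rcases hm with ⟨hm, hrm⟩ | hm
      · exact absurd (Finset.mem_biUnion.mpr ⟨a, haT, by simp⟩) hrm
      · exact hN1 a n m hn hm

/-- the effect operations of the basic actions of data linkage
dynamics preserve determinism of data linkages. -/
theorem effect_preserves_deterministic (cf : Finset A → A) (α : Act S F)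
    (L : Finset (Atomic S F A V)) (hL : Deterministic L) :
    Deterministic (effect cf α L) := by
  obtain ⟨h1, h2, h3, h4⟩ := hL
  have hL' : Deterministic L := ⟨h1, h2, h3, h4⟩
  have hS : ∀ (s : S) (a b : A), a ∈ spotCands L s → b ∈ spotCands L s → a = b := by
    intro s a b ha hb
    exact h1 s a b (mem_spotCands.mp ha) (mem_spotCands.mp hb)
  have hF : ∀ (a : A) (f : F) (b c : A),
      b ∈ fieldCands L a f → c ∈ fieldCands L a f → b = c := by
    intro a f b c hb hc
    exact h2 a f b c (mem_fieldCands.mp hb) (mem_fieldCands.mp hc)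
  have hV : ∀ (a : A) (n m : V), n ∈ valCands L a → m ∈ valCands L a → n = m := by
    intro a n m hn hm
    exact h4 a n m (mem_valCands.mp hn) (mem_valCands.mp hm)
  cases α with
  | getAO s =>
      simp only [effect]
      split_ifs with hld hat
      · exact hL'
      · refine det_spot_replace hL' ?_ ?_
        · intro x hx; simp only [Finset.mem_singleton] at hx; exact ⟨_, hx⟩
        · intro a b ha hb
          simp only [Finset.mem_singleton, Atomic.sLink.injEq] at ha hb
          rw [ha.2, hb.2]
      · exact hL'
  | setSpot s t =>
      simp only [effect]
      split_ifs with hld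
      · refine det_spot_replace hL' ?_ ?_
        · intro x hx
          simp only [Finset.mem_image] at hx
          obtain ⟨a, _, rfl⟩ := hx; exact ⟨a, rfl⟩
        · intro a b ha hb
          simp only [Finset.mem_image, Atomic.sLink.injEq] at ha hb
          obtain ⟨a', ha', _, rfl⟩ := ha
          obtain ⟨b', hb', _, rfl⟩ := hb
          exact hS t a' b' ha' hb'
      · exact hL'
  | clrSpot s =>
      simp only [effect]
      split_ifs with hld
      · exact det_subset (Finset.filter_subset _ _) hL'
      · exact hL'
  | eqTest s t => exact hL'
  | undefTest s => exact hL'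
  | addField s f =>
      simp only [effect]
      split_ifs with hld
      · refine det_add_pf hL' ?_
        intro x hx
        simp only [Finset.mem_image, Finset.mem_filter, hasFld, not_or,
          Finset.not_nonempty_iff_eq_empty, Finset.eq_empty_iff_forall_notMem] at hx
        obtain ⟨a, ⟨_, hnp, hnf⟩, rfl⟩ := hx
        exact ⟨a, f, rfl, hnp, fun b hb => hnf b (mem_fieldCands.mpr hb)⟩
      · exact hL'
  | rmvField s f =>
      simp only [effect]
      split_ifs with hld
      · exact det_subset (Finset.sdiff_subset) hL'
      · exact hL'
  | hasFieldA s f => exact hL'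
  | setField s f t =>
      simp only [effect]
      split_ifs with hld hne
      · -- spotCands L t nonempty
        refine det_field_replace hL' ?_ ?_ ?_
        · intro x hx
          simp only [Finset.mem_biUnion, Finset.mem_image] at hx
          obtain ⟨a, ha, b, _, rfl⟩ := hx
          exact ⟨a, ha, Or.inr ⟨b, rfl⟩⟩
        · intro a b c hb hc
          simp only [Finset.mem_biUnion, Finset.mem_image, Atomic.fLink.injEq] at hb hc
          obtain ⟨a', ha', b', hb', _, _, rfl⟩ := hb
          obtain ⟨a'', ha'', c', hc', _, _, rfl⟩ := hc
          exact hS t b' c' hb' hc'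
        · intro a b hb hp
          simp only [Finset.mem_biUnion, Finset.mem_image] at hp
          obtain ⟨a', ha', b', _, h⟩ := hp
          cases h
      · -- spotCands L t empty
        refine det_field_replace hL' ?_ ?_ ?_
        · intro x hx
          simp only [Finset.mem_biUnion, Finset.mem_singleton] at hx
          obtain ⟨a, ha, rfl⟩ := hx
          exact ⟨a, ha, Or.inl rfl⟩
        · intro a b c hb hc
          simp only [Finset.mem_biUnion, Finset.mem_singleton] at hb
          obtain ⟨a', ha', h⟩ := hb
          cases h
        · intro a b hb hp
          simp only [Finset.mem_biUnion, Finset.mem_singleton] at hb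
          obtain ⟨a', ha', h⟩ := hb
          cases h
      · exact hL'
  | clrField s f =>
      simp only [effect]
      split_ifs with hld
      · refine det_field_replace hL' ?_ ?_ ?_
        · intro x hx
          simp only [Finset.mem_image] at hx
          obtain ⟨a, ha, rfl⟩ := hx
          exact ⟨a, ha, Or.inl rfl⟩
        · intro a b c hb hc
          simp only [Finset.mem_image] at hb
          obtain ⟨_, _, h⟩ := hb; cases h
        · intro a b hb hp
          simp only [Finset.mem_image] at hb
          obtain ⟨_, _, h⟩ := hb; cases h
      · exact hL'
  | getField s t f =>
      simp only [effect]
      split_ifs with hld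
      · refine det_spot_replace hL' ?_ ?_
        · intro x hx
          simp only [Finset.mem_biUnion, Finset.mem_image] at hx
          obtain ⟨a, _, b, _, rfl⟩ := hx
          exact ⟨b, rfl⟩
        · intro a b ha hb
          simp only [Finset.mem_biUnion, Finset.mem_image, Atomic.sLink.injEq] at ha hb
          obtain ⟨a', ha', a'', ha'', _, rfl⟩ := ha
          obtain ⟨b', hb', b'', hb'', _, rfl⟩ := hb
          have := hS t a' b' ha' hb'
          subst this
          exact hF a' f a'' b'' ha'' hb''
      · exact hL'
  | assZero s =>
      simp only [effect]
      split_ifs with hld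
      · refine det_val_replace hL' ?_ ?_
        · intro x hx
          simp only [Finset.mem_image] at hx
          obtain ⟨a, ha, rfl⟩ := hx
          exact ⟨a, ha, 0, rfl⟩
        · intro a n m hn hm
          simp only [Finset.mem_image, Atomic.vAss.injEq] at hn hm
          obtain ⟨_, _, _, rfl⟩ := hn
          obtain ⟨_, _, _, rfl⟩ := hm
          rfl
      · exact hL'
  | assOne s =>
      simp only [effect]
      split_ifs with hld
      · refine det_val_replace hL' ?_ ?_
        · intro x hx
          simp only [Finset.mem_image] at hx
          obtain ⟨a, ha, rfl⟩ := hx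
          exact ⟨a, ha, 1, rfl⟩
        · intro a n m hn hm
          simp only [Finset.mem_image, Atomic.vAss.injEq] at hn hm
          obtain ⟨_, _, _, rfl⟩ := hn
          obtain ⟨_, _, _, rfl⟩ := hm
          rfl
      · exact hL'
  | assAdd s t u =>
      simp only [effect]
      split_ifs with hld
      · refine det_val_replace hL' ?_ ?_
        · intro x hx
          simp only [Finset.mem_biUnion, Finset.mem_image] at hx
          obtain ⟨a, ha, n, _, m, _, rfl⟩ := hx
          exact ⟨a, ha, n + m, rfl⟩
        · intro a n m hn hm
          simp only [Finset.mem_biUnion, Finset.mem_image, Atomic.vAss.injEq] at hn hm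
          obtain ⟨a', _, n', ⟨at1, hat1, hn1⟩, m', ⟨au1, hau1, hm1⟩, _, rfl⟩ := hn
          obtain ⟨b', _, n'', ⟨at2, hat2, hn2⟩, m'', ⟨au2, hau2, hm2⟩, _, rfl⟩ := hm
          have et := hS t at1 at2 hat1 hat2; subst et
          have eu := hS u au1 au2 hau1 hau2; subst eu
          rw [hV at1 n' n'' hn1 hn2, hV au1 m' m'' hm1 hm2]
      · exact hL'
  | assMul s t u =>
      simp only [effect]
      split_ifs with hld
      · refine det_val_replace hL' ?_ ?_
        · intro x hx
          simp only [Finset.mem_biUnion, Finset.mem_image] at hx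
          obtain ⟨a, ha, n, _, m, _, rfl⟩ := hx
          exact ⟨a, ha, n * m, rfl⟩
        · intro a n m hn hm
          simp only [Finset.mem_biUnion, Finset.mem_image, Atomic.vAss.injEq] at hn hm
          obtain ⟨a', _, n', ⟨at1, hat1, hn1⟩, m', ⟨au1, hau1, hm1⟩, _, rfl⟩ := hn
          obtain ⟨b', _, n'', ⟨at2, hat2, hn2⟩, m'', ⟨au2, hau2, hm2⟩, _, rfl⟩ := hm
          have et := hS t at1 at2 hat1 hat2; subst et
          have eu := hS u au1 au2 hau1 hau2; subst eu
          rw [hV at1 n' n'' hn1 hn2, hV au1 m' m'' hm1 hm2]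
      · exact hL'
  | assNeg s t =>
      simp only [effect]
      split_ifs with hld
      · refine det_val_replace hL' ?_ ?_
        · intro x hx
          simp only [Finset.mem_biUnion, Finset.mem_image] at hx
          obtain ⟨a, ha, n, _, rfl⟩ := hx
          exact ⟨a, ha, -n, rfl⟩
        · intro a n m hn hm
          simp only [Finset.mem_biUnion, Finset.mem_image, Atomic.vAss.injEq] at hn hm
          obtain ⟨a', _, n', ⟨at1, hat1, hn1⟩, _, rfl⟩ := hn
          obtain ⟨b', _, n'', ⟨at2, hat2, hn2⟩, _, rfl⟩ := hm
          have et := hS t at1 at2 hat1 hat2; subst et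
          rw [hV at1 n' n'' hn1 hn2]
      · exact hL'
  | assInv s t =>
      simp only [effect]
      split_ifs with hld
      · refine det_val_replace hL' ?_ ?_
        · intro x hx
          simp only [Finset.mem_biUnion, Finset.mem_image] at hx
          obtain ⟨a, ha, n, _, rfl⟩ := hx
          exact ⟨a, ha, n⁻¹, rfl⟩
        · intro a n m hn hm
          simp only [Finset.mem_biUnion, Finset.mem_image, Atomic.vAss.injEq] at hn hm
          obtain ⟨a', _, n', ⟨at1, hat1, hn1⟩, _, rfl⟩ := hn
          obtain ⟨b', _, n'', ⟨at2, hat2, hn2⟩, _, rfl⟩ := hm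
          have et := hS t at1 at2 hat1 hat2; subst et
          rw [hV at1 n' n'' hn1 hn2]
      · exact hL'
  | eqValTest s t => exact hL'
  | undefValTest s => exact hL'

end Effects
end

section
/- The retrieve function is surjective onto deterministic data linkages: for every deterministic data linkage L there exists a concrete state (σ, ζ, ξ) in DLR such that L = retrieve(σ, ζ, ξ). -/
open scoped Classical

variable {S F A V : Type}

/-- the retrieve function is surjective onto deterministic data
linkages: every deterministic data linkage is `retrieve` of some concrete state
in DLR. -/
theorem retrieve_surjective_onto_deterministic
    [Fintype S] [Fintype F] [Fintype A] [Fintype V]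
    [DecidableEq S] [DecidableEq F] [DecidableEq A] [DecidableEq V]
    (L : Finset (Atomic S F A V)) (hL : Deterministic L) :
    ∃ c : CState S F A V, InDLR c ∧ L = retrieve c := by
  classical
  obtain ⟨h1, h2, h3, h4⟩ := hL
  let Active : A → Prop := fun a =>
    (∃ s, Atomic.sLink s a ∈ L) ∨ (∃ f, Atomic.pfLink a f ∈ L) ∨
    (∃ f b, Atomic.fLink a f b ∈ L) ∨ (∃ f b, Atomic.fLink b f a ∈ L) ∨
    (∃ v, Atomic.vAss a v ∈ L)
  refine ⟨⟨fun s => if h : ∃ a, Atomic.sLink s a ∈ L then some h.choose else none,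
    fun a => if Active a then some (fun f =>
      if Atomic.pfLink a f ∈ L then some none
      else if h : ∃ b, Atomic.fLink a f b ∈ L then some (some h.choose) else none)
    else none,
    fun a => if Active a then
      some (if h : ∃ v, Atomic.vAss a v ∈ L then some h.choose else none) else none⟩,
    ⟨?_, ?_, ?_⟩, ?_⟩
  · intro a
    by_cases ha : Active a <;> simp [ha]
  · intro s a hsa
    simp only at hsa
    split at hsa
    · rename_i h
      have := h.choose_spec
      rw [Option.some_inj] at hsa
      have ha : Active a := Or.inl ⟨s, hsa ▸ this⟩
      simp [ha]
    · exact absurd hsa (by simp)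
  · intro a g f b hg hgf
    simp only at hg
    split at hg
    · rw [Option.some_inj] at hg
      subst hg
      simp only at hgf
      split at hgf
      · simp at hgf
      · split at hgf
        · rename_i h
          rw [Option.some_inj, Option.some_inj] at hgf
          subst hgf
          have hb : Active h.choose := Or.inr (Or.inr (Or.inr (Or.inl ⟨f, a, h.choose_spec⟩)))
          simp [hb]
        · simp at hgf
    · simp at hg
  · ext x
    simp only [retrieve, Finset.mem_filter, Finset.mem_univ, true_and]
    cases x with
    | sLink s a =>
      simp only
      constructor
      · intro hx
        have h : ∃ a, Atomic.sLink s a ∈ L := ⟨a, hx⟩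
        simp only [dif_pos h]
        exact congrArg some (h1 s h.choose a h.choose_spec hx)
      · intro hx
        split at hx
        · rename_i h
          rw [Option.some_inj] at hx
          exact hx ▸ h.choose_spec
        · simp at hx
    | pfLink a f =>
      simp only
      constructor
      · intro hx
        have ha : Active a := Or.inr (Or.inl ⟨f, hx⟩)
        simp [ha, hx]
      · intro hx
        by_cases ha : Active a
        · simp only [if_pos ha, Option.map_some, Option.some_inj] at hx
          split at hx
          · assumption
          · split at hx <;> simp at hx
        · simp [ha] at hx
    | fLink a f b =>
      simp only
      constructor
      · intro hx
        have ha : Active a := Or.inr (Or.inr (Or.inl ⟨f, b, hx⟩))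
        have hnpf : Atomic.pfLink a f ∉ L := h3 a f b hx
        have h : ∃ c, Atomic.fLink a f c ∈ L := ⟨b, hx⟩
        simp only [if_pos ha, Option.map_some, Option.some_inj, if_neg hnpf, dif_pos h]
        exact h2 a f h.choose b h.choose_spec hx
      · intro hx
        by_cases ha : Active a
        · simp only [if_pos ha, Option.map_some, Option.some_inj] at hx
          split at hx
          · simp at hx
          · split at hx
            · rename_i h
              rw [Option.some_inj, Option.some_inj] at hx
              exact hx ▸ h.choose_spec
            · simp at hx
        · simp [ha] at hx
    | vAss a n =>
      simp only
      constructor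
      · intro hx
        have ha : Active a := Or.inr (Or.inr (Or.inr (Or.inr ⟨n, hx⟩)))
        have h : ∃ v, Atomic.vAss a v ∈ L := ⟨n, hx⟩
        simp only [if_pos ha, Option.some_inj, dif_pos h]
        exact h4 a h.choose n h.choose_spec hx
      · intro hx
        by_cases ha : Active a
        · simp only [if_pos ha, Option.some_inj] at hx
          split at hx
          · rename_i h
            rw [Option.some_inj] at hx
            exact hx ▸ h.choose_spec
          · simp at hx
        · simp [ha] at hx
end

section
/- In a concrete state (σ, ζ, ξ), full garbage collection restricted to the reachable atomic objects yields a valid concrete state: if (σ, ζ, ξ) ∈ DLR, then (σ, ζ restricted to reach(σ,ζ), ξ restricted to reach(σ,ζ)) ∈ DLR, where reach(σ,ζ) is the set of atomic objects reachable from the range of σ by following field links of ζ. -/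
open scoped Classical

variable {S F A V : Type}

/-- Reachability from an atomic object through defined field links of `zeta`. -/
inductive ReachFrom (zeta : A → Option (F → Option (Option A))) (a : A) : A → Prop where
  | refl : ReachFrom zeta a a
  | step {b c : A} (f : F) (g : F → Option (Option A)) :
      ReachFrom zeta a b → zeta b = some g → g f = some (some c) →
      ReachFrom zeta a c

/-- Atomic objects reachable from the contents of the spots. -/
def reachS (sigma : S → Option A) (zeta : A → Option (F → Option (Option A))) :
    Set A :=
  {b | ∃ s a, sigma s = some a ∧ ReachFrom zeta a b}

noncomputable def restrZ (zeta : A → Option (F → Option (Option A)))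
    (A' : Set A) : A → Option (F → Option (Option A)) :=
  fun a => if a ∈ A' then zeta a else none

noncomputable def restrX (xi : A → Option (Option V)) (A' : Set A) :
    A → Option (Option V) :=
  fun a => if a ∈ A' then xi a else none

/-- Effect of full garbage collection on concrete states. -/
noncomputable def effFgc (c : CState S F A V) : CState S F A V :=
  ⟨c.sigma, restrZ c.zeta (reachS c.sigma c.zeta),
    restrX c.xi (reachS c.sigma c.zeta)⟩

/-- Atomic objects occurring in a cycle of field links. -/
def incycle (zeta : A → Option (F → Option (Option A))) : Set A :=
  {a | (zeta a).isSome ∧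
    ∃ g f b, zeta a = some g ∧ g f = some (some b) ∧ ReachFrom zeta b a}

/-- Effect of restricted garbage collection on concrete states. -/
noncomputable def effRgc (c : CState S F A V) : CState S F A V :=
  ⟨c.sigma, restrZ c.zeta (reachS c.sigma c.zeta ∪ incycle c.zeta),
    restrX c.xi (reachS c.sigma c.zeta ∪ incycle c.zeta)⟩

/-- Safe disposal of an atomic object: remove it from the domains of `zeta`
and `xi` if it is unreachable, otherwise do nothing. -/
noncomputable def sd [DecidableEq A] (a : A) (c : CState S F A V) :
    CState S F A V :=
  if a ∈ reachS c.sigma c.zeta then c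
  else ⟨c.sigma, Function.update c.zeta a none, Function.update c.xi a none⟩

/-- Clear every spot whose content is `a`. -/
noncomputable def clrs (a : A) (sigma : S → Option A) : S → Option A :=
  fun s => if sigma s = some a then none else sigma s

/-- Clear (set to ⊥) every field whose content is `a`. -/
noncomputable def clrf (a : A) (zeta : A → Option (F → Option (Option A))) :
    A → Option (F → Option (Option A)) :=
  fun a' => (zeta a').map (fun g f => if g f = some (some a) then some none else g f)

/-- Unsafe disposal of an atomic object. -/
noncomputable def ud [DecidableEq A] (a : A) (c : CState S F A V) :
    CState S F A V :=
  sd a ⟨clrs a c.sigma, clrf a c.zeta, c.xi⟩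

/-- full garbage collection (restriction of `zeta` and `xi` to the
reachable atomic objects) yields a valid concrete state. -/
theorem effFgc_mem_DLR (c : CState S F A V) (hc : InDLR c) :
    InDLR (effFgc c) := by
  obtain ⟨h1, h2, h3⟩ := hc
  refine ⟨?_, ?_, ?_⟩
  · intro a
    simp only [effFgc, restrZ, restrX]
    split <;> simp [h1 a]
  · intro s a hsa
    simp only [effFgc, restrZ] at *
    have : a ∈ reachS c.sigma c.zeta := ⟨s, a, hsa, ReachFrom.refl⟩
    rw [if_pos this]
    exact h2 s a hsa
  · intro a g f b hza hgf
    simp only [effFgc, restrZ] at *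
    split at hza
    case isTrue ha =>
      have hb : b ∈ reachS c.sigma c.zeta := by
        obtain ⟨s, a0, hs, hr⟩ := ha
        exact ⟨s, a0, hs, ReachFrom.step f g hr hza hgf⟩
      rw [if_pos hb]
      exact h3 a g f b hza hgf
    case isFalse => simp at hza
end

section
/- Unsafe disposal of an atomic object a always removes a: for every concrete state (σ,ζ,ξ) ∈ DLR and every a ∈ AtObj, a is not in the domain of the ζ-component of ud(a,(σ,ζ,ξ)), where ud(a,(σ,ζ,ξ)) = sd(a, (clrs(a,σ), clrf(a,ζ), ξ)), clrs(a,σ) sets to ⊥ every spot whose content is a, clrf(a,ζ) sets to ⊥ every field whose content is a, and sd(a,·) removes a from the domains of ζ and ξ when a is unreachable. -/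
open scoped Classical

variable {S F A V : Type}

/-- unsafe disposal of an atomic object `a` always removes `a`
from the domain of the `zeta`-component. -/
theorem ud_removes [DecidableEq A] (c : CState S F A V) (hc : InDLR c) (a : A) :
    (ud a c).zeta a = none := by
  have hreach : ∀ b x, ReachFrom (clrf a c.zeta) b x → x = b ∨ x ≠ a := by
    intro b x h
    induction h with
    | refl => exact Or.inl rfl
    | step f g _ hz hg _ =>
      right
      simp only [clrf, Option.map_eq_some_iff] at hz
      obtain ⟨g0, hg0, rfl⟩ := hz
      intro hxa
      rw [hxa] at hg
      by_cases h : g0 f = some (some a) <;> simp [h] at hg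
  have hna : a ∉ reachS (clrs a c.sigma) (clrf a c.zeta) := by
    rintro ⟨s, b, hs, hr⟩
    rcases hreach b a hr with rfl | hne
    · simp only [clrs] at hs
      split at hs
      · exact nomatch hs
      · exact (by assumption : ¬ _) hs
    · exact hne rfl
  simp [ud, sd, hna]
end

section
/- The get-fresh-atomic-object effect on concrete states produces a fresh object not previously in use and preserves the well-formedness invariant: if (σ,ζ,ξ) ∈ DLR and dom(ζ) ⊊ AtObj, then letting a = cf(AtObj \ dom(ζ)), the state (σ ⊕ {s ↦ a}, ζ ⊕ {a ↦ ∅}, ξ ⊕ {a ↦ ⊥}) is in DLR, a ∉ dom(ζ), and a is the content of s in the new state. -/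
open scoped Classical

variable {S F A V : Type}

/-- The domain of the `zeta`-component, as a finset. -/
noncomputable def domZ [Fintype A] (c : CState S F A V) : Finset A :=
  Finset.univ.filter (fun a => (c.zeta a).isSome)

/-- if not all atomic objects are in use, then the
get-fresh-atomic-object effect produces a fresh object `a = cf(AtObj \ dom ζ)`
not previously in use, makes it the content of spot `s`, and the resulting
state is again in DLR. -/
theorem getatobj_fresh [Fintype A] [DecidableEq A] [DecidableEq S]
    (cf : (B : Finset A) → B.Nonempty → A) (hcf : ∀ B h, cf B h ∈ B)
    (c : CState S F A V) (hc : InDLR c) (s : S)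
    (hlt : domZ c ⊂ Finset.univ)
    (hne : (Finset.univ \ domZ c).Nonempty) :
    ∀ a, a = cf (Finset.univ \ domZ c) hne →
      InDLR ⟨Function.update c.sigma s (some a),
             Function.update c.zeta a (some (fun _ => none)),
             Function.update c.xi a (some none)⟩ ∧
      c.zeta a = none ∧
      Function.update c.sigma s (some a) s = some a := by
  intro a ha
  have hmem := hcf (Finset.univ \ domZ c) hne
  rw [← ha] at hmem
  have hnz : c.zeta a = none := by
    have := (Finset.mem_sdiff.mp hmem).2
    simpa [domZ] using this
  obtain ⟨h1, h2, h3⟩ := hc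
  refine ⟨⟨?_, ?_, ?_⟩, hnz, by simp⟩
  · intro b
    by_cases hb : b = a <;> simp [Function.update, hb, h1 b]
  · intro t b hb
    simp [Function.update] at hb ⊢
    by_cases hba : b = a
    · simp [hba]
    · simp [hba]
      split at hb
      · exact absurd hb.symm (by simp [hba])
      · exact h2 t b hb
  · intro b g f d hbg hgf
    simp [Function.update] at hbg ⊢
    by_cases hda : d = a
    · simp [hda]
    · simp [hda]
      split at hbg
      · obtain rfl : (fun _ => none) = g := Option.some_injective _ hbg
        simp at hgf
      · exact h3 b g f d hbg hgf
end

section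
/- The data linkage overriding combination with a spot link on the representation side corresponds to function override in a way compatible with determinism: for any (σ,ζ,ξ) ∈ DLR, spot s, and a ∈ dom(ζ), retrieve(σ,ζ,ξ) ⊘ (s=a) = retrieve(σ ⊕ {s ↦ a}, ζ, ξ), where L ⊘ (s=a) denotes removing all spot links at s from L and adding s=a. -/
open scoped Classical

variable {S F A V : Type}

/-- Overriding combination of a data linkage (as a finite set) with a single
spot link `s = a`: remove all spot links at `s` and add `s = a`. -/
noncomputable def ovrSpot [Fintype S] [Fintype F] [Fintype A] [Fintype V]
    [DecidableEq S] [DecidableEq F] [DecidableEq A] [DecidableEq V]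
    (L : Finset (Atomic S F A V)) (s : S) (a : A) : Finset (Atomic S F A V) :=
  (L.filter (fun x => ∀ b : A, x ≠ Atomic.sLink s b)) ∪ {Atomic.sLink s a}

/-- data linkage overriding combination with a spot link
corresponds to function override on the representation side. -/
theorem ovrSpot_retrieve [Fintype S] [Fintype F] [Fintype A] [Fintype V]
    [DecidableEq S] [DecidableEq F] [DecidableEq A] [DecidableEq V]
    (c : CState S F A V) (hc : InDLR c) (s : S) (a : A)
    (ha : (c.zeta a).isSome) :
    ovrSpot (retrieve c) s a =
      retrieve ⟨Function.update c.sigma s (some a), c.zeta, c.xi⟩ := by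
  ext x
  simp only [ovrSpot, retrieve, Finset.mem_union, Finset.mem_filter, Finset.mem_univ,
    true_and, Finset.mem_singleton]
  cases x with
  | sLink t b =>
    by_cases hts : t = s
    · subst hts
      constructor
      · rintro (⟨_, h⟩ | h)
        · exact absurd rfl (h b)
        · injection h with _ h2; simp [h2, Function.update_self]
      · intro h
        simp [Function.update_self] at h
        right; simp [h]
    · constructor
      · rintro (⟨h, _⟩ | h)
        · simpa [Function.update_of_ne hts] using h
        · simp at h; exact absurd h.1 hts
      · intro h
        left
        refine ⟨by simpa [Function.update_of_ne hts] using h, ?_⟩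
        intro b' hb; injection hb with h1 h2; exact hts h1
    | pfLink a f => simp
    | fLink a f b => simp
    | vAss a n => simp
end
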